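/- arXiv:1312.5148 — 3 statements merged into one kernel-verified Lean document; each statement's English description precedes it below -/
import Mathlib

section
/- Nearest neighbors of the virtual object minimize the post-exchange truncated team distance: for a fixed swap-out object R, if P* minimizes the truncated object distance oDis~(V, P) = sqrt(Σᵢ (wᵢ · max(vᵢ − pᵢ, 0))²) over a finite set of objects 𝕆, then P* also minimizes the post-exchange truncated team-to-target distance D(P) = sqrt(Σᵢ (wᵢ · max(tᵢ − (cᵢ − rᵢ + λ_r·pᵢ), 0))²) over 𝕆, provided all weak-dimension identities hold (tᵢ − (cᵢ − rᵢ + λ_r·pᵢ) = λ_r·(vᵢ − pᵢ) on weak dimensions and cᵢ − rᵢ + λ_r·pᵢ ≥ tᵢ is not required on strong dimensions where additionally pᵢ ≥ 0 and cᵢ − rᵢ ≥ tᵢ). -/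
theorem rtc_star_nearest_neighbor_minimizes
    (d : ℕ) (C T R V w : Fin d → ℝ) (lr : ℝ) (hlr : lr > 0)
    (hw : ∀ i, w i > 0)
    (hV : ∀ i, V i = if T i - C i ≥ 0 then ((T i - C i) + R i) / lr else 0)
    (𝕆 : Finset (Fin d → ℝ)) (h𝕆 : 𝕆.Nonempty)
    (hP : ∀ P ∈ 𝕆, ∀ i, P i ≥ 0)
    (hstrong : ∀ i, T i - C i < 0 → C i - R i ≥ T i)
    (Pstar : Fin d → ℝ) (hPstar : Pstar ∈ 𝕆)
    (hmin : ∀ P ∈ 𝕆,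
      Real.sqrt (∑ i, (w i * max (V i - Pstar i) 0) ^ 2) ≤
        Real.sqrt (∑ i, (w i * max (V i - P i) 0) ^ 2)) :
    ∀ P ∈ 𝕆,
      Real.sqrt (∑ i, (w i * max (T i - (C i - R i + lr * Pstar i)) 0) ^ 2) ≤
        Real.sqrt (∑ i, (w i * max (T i - (C i - R i + lr * P i)) 0) ^ 2) := by
  have key : ∀ P ∈ 𝕆, ∀ i,
      max (T i - (C i - R i + lr * P i)) 0 = lr * max (V i - P i) 0 := by
    intro P hPm i
    have hPi := hP P hPm i
    by_cases h : T i - C i ≥ 0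
    · have hv : V i = ((T i - C i) + R i) / lr := by rw [hV i]; simp [h]
      have : T i - (C i - R i + lr * P i) = lr * (V i - P i) := by
        rw [hv]; field_simp; ring
      rw [this, mul_max_of_nonneg _ _ hlr.le, mul_zero]
    · push_neg at h
      have hv : V i = 0 := by rw [hV i]; simp [not_le.mpr h]
      have h1 : T i - (C i - R i + lr * P i) ≤ 0 := by
        have := hstrong i h
        nlinarith
      have h2 : V i - P i ≤ 0 := by rw [hv]; linarith
      rw [max_eq_right h1, max_eq_right h2, mul_zero]
  intro P hPm
  have e : ∀ Q, Q ∈ 𝕆 →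
      (∑ i, (w i * max (T i - (C i - R i + lr * Q i)) 0) ^ 2) =
        lr ^ 2 * ∑ i, (w i * max (V i - Q i) 0) ^ 2 := by
    intro Q hQ
    rw [Finset.mul_sum]
    apply Finset.sum_congr rfl
    intro i _
    rw [key Q hQ i]; ring
  rw [e P hPm, e Pstar hPstar, Real.sqrt_mul (by positivity),
    Real.sqrt_mul (by positivity)]
  exact mul_le_mul_of_nonneg_left (hmin P hPm) (Real.sqrt_nonneg _)
end

section
/- Under the assumptions of the RTC* correspondence (pᵢ ≥ 0 on all dimensions, cᵢ − rᵢ ≥ tᵢ on strong dimensions, λ_r > 0), the post-exchange truncated team distance equals λ_r times the truncated object distance from V to P: sqrt(Σᵢ (wᵢ · max(tᵢ − (cᵢ − rᵢ + λ_r·pᵢ), 0))²) = λ_r · sqrt(Σᵢ (wᵢ · max(vᵢ − pᵢ, 0))²). -/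
theorem rtc_star_distance_correspondence
    (d : ℕ) (C T R P V w : Fin d → ℝ) (lr : ℝ) (hlr : lr > 0)
    (hw : ∀ i, w i > 0)
    (hV : ∀ i, V i = if T i - C i ≥ 0 then ((T i - C i) + R i) / lr else 0)
    (hP : ∀ i, P i ≥ 0)
    (hstrong : ∀ i, T i - C i < 0 → C i - R i ≥ T i) :
    Real.sqrt (∑ i, (w i * max (T i - (C i - R i + lr * P i)) 0) ^ 2) =
      lr * Real.sqrt (∑ i, (w i * max (V i - P i) 0) ^ 2) := by
  have key : ∀ i, max (T i - (C i - R i + lr * P i)) 0 = lr * max (V i - P i) 0 := by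
    intro i
    rw [hV i]
    by_cases h : T i - C i ≥ 0
    · simp only [if_pos h]
      rw [mul_max_of_nonneg _ _ hlr.le, mul_zero]
      congr 1
      field_simp
      ring
    · simp only [if_neg h]
      push_neg at h
      have h1 := hstrong i h
      have h2 := hP i
      have : max (0 - P i) 0 = 0 := by
        apply max_eq_right; linarith
      rw [this, mul_zero]
      apply max_eq_right
      nlinarith
  have : (∑ i, (w i * max (T i - (C i - R i + lr * P i)) 0) ^ 2)
      = lr ^ 2 * ∑ i, (w i * max (V i - P i) 0) ^ 2 := by
    rw [Finset.mul_sum]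
    congr 1; ext i
    rw [key i]; ring
  rw [this, Real.sqrt_mul (by positivity), Real.sqrt_sq hlr.le]
end

section
/- Scaling invariance of the RTC* ranking: for λ_r > 0, the ordering of candidate objects P by post-exchange truncated team distance is identical to their ordering by truncated object distance to the virtual object V; i.e., for any two candidates P, Q satisfying the RTC* assumptions, D(P) ≤ D(Q) iff oDis~(V,P) ≤ oDis~(V,Q), where D(P) is the post-exchange truncated team-to-target distance. -/
theorem rtc_star_ranking_invariance
    (d : ℕ) (C T R V P Q w : Fin d → ℝ) (lr : ℝ) (hlr : lr > 0)
    (hw : ∀ i, w i > 0)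
    (hV : ∀ i, V i = if T i - C i ≥ 0 then ((T i - C i) + R i) / lr else 0)
    (hP : ∀ i, P i ≥ 0) (hQ : ∀ i, Q i ≥ 0)
    (hstrong : ∀ i, T i - C i < 0 → C i - R i ≥ T i) :
    (Real.sqrt (∑ i, (w i * max (T i - (C i - R i + lr * P i)) 0) ^ 2) ≤
        Real.sqrt (∑ i, (w i * max (T i - (C i - R i + lr * Q i)) 0) ^ 2)) ↔
      (Real.sqrt (∑ i, (w i * max (V i - P i) 0) ^ 2) ≤
        Real.sqrt (∑ i, (w i * max (V i - Q i) 0) ^ 2)) := by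
  have key : ∀ X : Fin d → ℝ, (∀ i, X i ≥ 0) →
      (∑ i, (w i * max (T i - (C i - R i + lr * X i)) 0) ^ 2)
        = lr ^ 2 * ∑ i, (w i * max (V i - X i) 0) ^ 2 := by
    intro X hX
    rw [Finset.mul_sum]
    apply Finset.sum_congr rfl
    intro i _
    rcases le_or_gt 0 (T i - C i) with h | h
    · have hVi : V i = ((T i - C i) + R i) / lr := by rw [hV i, if_pos h]
      have : T i - (C i - R i + lr * X i) = lr * (V i - X i) := by
        rw [hVi]; field_simp; ring
      rw [this]
      rcases le_or_gt (V i - X i) 0 with h2 | h2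
      · rw [max_eq_right, max_eq_right h2]
        · ring_nf
        · exact mul_nonpos_of_nonneg_of_nonpos hlr.le h2
      · rw [max_eq_left (by positivity), max_eq_left h2.le]; ring
    · have hVi : V i = 0 := by rw [hV i, if_neg (not_le.mpr h)]
      have h1 : T i - (C i - R i + lr * X i) ≤ 0 := by
        have := hstrong i h
        nlinarith [mul_nonneg hlr.le (hX i)]
      have h2 : V i - X i ≤ 0 := by rw [hVi]; linarith [hX i]
      rw [max_eq_right h1, max_eq_right h2]; ring
  rw [key P hP, key Q hQ, Real.sqrt_mul (by positivity), Real.sqrt_mul (by positivity)]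
  constructor
  · intro h
    have hs : Real.sqrt (lr ^ 2) > 0 := Real.sqrt_pos.mpr (by positivity)
    exact le_of_mul_le_mul_left h hs
  · intro h
    exact mul_le_mul_of_nonneg_left h (Real.sqrt_nonneg _)
end
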